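/- Let a, b be coprime integers and let ℓ be a prime with ℓ ∉ {3, 7}. If ℓ divides both -3(a² - 231ab + 735b²) and 2(a⁴ + 518a³b - 11025a²b² + 6174ab³ - 64827b⁴), then ℓ divides both a and b (a contradiction); hence no prime ℓ ∉ {3,7} divides the gcd of these two values when gcd(a,b)=1. -/
import Mathlib


/-- If `ℓ ∉ {3,7}` is prime and `gcd(a,b)=1`, then `ℓ` does not divide both
`Ã₇(a,b) = -3(a² - 231ab + 735b²)` and
`B̃₇(a,b) = 2(a⁴ + 518a³b - 11025a²b² + 6174ab³ - 64827b⁴)`. -/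
theorem stmt_0 (a b : ℤ) (hab : IsCoprime a b) (ℓ : ℕ) (hℓ : ℓ.Prime)
    (h3 : ℓ ≠ 3) (h7 : ℓ ≠ 7) :
    ¬ ((ℓ : ℤ) ∣ -3 * (a ^ 2 - 231 * a * b + 735 * b ^ 2) ∧
       (ℓ : ℤ) ∣ 2 * (a ^ 4 + 518 * a ^ 3 * b - 11025 * a ^ 2 * b ^ 2
          + 6174 * a * b ^ 3 - 64827 * b ^ 4)) := by
  rintro ⟨h1, h2⟩
  have hp : Prime (ℓ : ℤ) := Nat.prime_iff_prime_int.mp hℓ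
  obtain ⟨u, v, huv⟩ := hab
  have hnotboth : ¬ ((ℓ : ℤ) ∣ a ∧ (ℓ : ℤ) ∣ b) := by
    rintro ⟨ha, hb⟩
    exact hp.not_dvd_one (huv ▸ dvd_add (ha.mul_left u) (hb.mul_left v))
  by_cases h2' : ℓ = 2
  · -- ℓ = 2 : a² - 231ab + 735b² is odd since a, b are not both even
    subst h2'
    have hA : (2 : ℤ) ∣ (a ^ 2 - 231 * a * b + 735 * b ^ 2) :=
      (hp.dvd_mul.mp h1).resolve_left (by norm_num)
    have hz : ((a : ZMod 2)) ^ 2 - 231 * a * b + 735 * (b : ZMod 2) ^ 2 = 0 := by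
      have := (ZMod.intCast_zmod_eq_zero_iff_dvd (a ^ 2 - 231 * a * b + 735 * b ^ 2) 2).mpr
        (by exact_mod_cast hA)
      push_cast at this
      linear_combination this
    have key : ∀ x y : ZMod 2, x ^ 2 - 231 * x * y + 735 * y ^ 2 = 0 → x = 0 ∧ y = 0 := by
      decide
    obtain ⟨hx, hy⟩ := key _ _ hz
    exact hnotboth ⟨(ZMod.intCast_zmod_eq_zero_iff_dvd a 2).mp hx,
      (ZMod.intCast_zmod_eq_zero_iff_dvd b 2).mp hy⟩
  · -- ℓ ∉ {2,3,7}
    have hd2 : ¬ (ℓ : ℤ) ∣ 2 := by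
      intro h
      exact h2' ((Nat.prime_dvd_prime_iff_eq hℓ Nat.prime_two).mp (by exact_mod_cast h))
    have hd3 : ¬ (ℓ : ℤ) ∣ 3 := by
      intro h
      exact h3 ((Nat.prime_dvd_prime_iff_eq hℓ Nat.prime_three).mp (by exact_mod_cast h))
    have hd7 : ¬ (ℓ : ℤ) ∣ 7 := by
      intro h
      exact h7 ((Nat.prime_dvd_prime_iff_eq hℓ (by norm_num)).mp (by exact_mod_cast h))
    have hA : (ℓ : ℤ) ∣ (a ^ 2 - 231 * a * b + 735 * b ^ 2) := by
      rcases hp.dvd_mul.mp h1 with h | h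
      · exact absurd ((dvd_neg).mp h) hd3
      · exact h
    have hB : (ℓ : ℤ) ∣ (a ^ 4 + 518 * a ^ 3 * b - 11025 * a ^ 2 * b ^ 2
        + 6174 * a * b ^ 3 - 64827 * b ^ 4) :=
      (hp.dvd_mul.mp h2).resolve_left hd2
    have hdR : ¬ (ℓ : ℤ) ∣ 379718108242115328 := by
      intro h
      have : (ℓ : ℤ) ∣ 2 ^ 8 * 3 ^ 7 * 7 ^ 14 := by norm_num at h ⊢; exact h
      rcases hp.dvd_mul.mp this with h' | h'
      · rcases hp.dvd_mul.mp h' with h'' | h''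
        · exact hd2 (hp.dvd_of_dvd_pow h'')
        · exact hd3 (hp.dvd_of_dvd_pow h'')
      · exact hd7 (hp.dvd_of_dvd_pow h')
    have keyb : (ℓ : ℤ) ∣ 379718108242115328 * b ^ 6 := by
      have : (277703838508320 * b ^ 4 + 111081535403328 * a * b ^ 3
            - 6198946516224 * a ^ 2 * b ^ 2 - 11892902112 * a ^ 3 * b)
            * (a ^ 2 - 231 * a * b + 735 * b ^ 2)
          + (-2708837165664 * b ^ 2 + 11892902112 * a * b)
            * (a ^ 4 + 518 * a ^ 3 * b - 11025 * a ^ 2 * b ^ 2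
              + 6174 * a * b ^ 3 - 64827 * b ^ 4)
          = 379718108242115328 * b ^ 6 := by ring
      exact this ▸ dvd_add (hA.mul_left _) (hB.mul_left _)
    have keya : (ℓ : ℤ) ∣ 379718108242115328 * a ^ 6 := by
      have : (253929565825175520 * a ^ 4 - 6093894436099866144 * b * a ^ 3
            + 3234384600562303776 * b ^ 2 * a ^ 2 - 35883361228879898496 * b ^ 3 * a)
            * (a ^ 2 - 231 * a * b + 735 * b ^ 2)
          + (125788542416939808 * a ^ 2 - 406840830259409280 * b * a)
            * (a ^ 4 + 518 * a ^ 3 * b - 11025 * a ^ 2 * b ^ 2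
              + 6174 * a * b ^ 3 - 64827 * b ^ 4)
          = 379718108242115328 * a ^ 6 := by ring
      exact this ▸ dvd_add (hA.mul_left _) (hB.mul_left _)
    have hb6 : (ℓ : ℤ) ∣ b := hp.dvd_of_dvd_pow ((hp.dvd_mul.mp keyb).resolve_left hdR)
    have ha6 : (ℓ : ℤ) ∣ a := hp.dvd_of_dvd_pow ((hp.dvd_mul.mp keya).resolve_left hdR)
    exact hnotboth ⟨ha6, hb6⟩
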